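/- Let r ∈ ℂ with r ≠ 0 and |r| ≠ 1, and suppose the complex number (conj(r)·|r|² − r²)/(r² − conj(r)) is a positive real number t. Then r³ is a positive real number (equivalently r = |r|·ζ^m for some m ∈ {0,1,2}, where ζ = e^{2πi/3}), and t = |r|. -/

import Mathlib

theorem stmt7 (r : ℂ) (hr : r ≠ 0) (habs : ‖r‖ ≠ 1)
    (t : ℝ) (ht : 0 < t)
    (h : ((starRingEnd ℂ) r * (‖r‖ : ℂ) ^ 2 - r ^ 2) /
        (r ^ 2 - (starRingEnd ℂ) r) = (t : ℂ)) :
    (∃ m : ℕ, m < 3 ∧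
        r = (‖r‖ : ℂ) * Complex.exp (2 * Real.pi * Complex.I / 3) ^ m) ∧
      t = ‖r‖ := by
  set s := ‖r‖ with hs
  have hs0 : 0 < s := norm_pos_iff.mpr hr
  -- denominator nonzero
  have hden : r ^ 2 - (starRingEnd ℂ) r ≠ 0 := by
    intro h0
    have h1 : r ^ 2 = (starRingEnd ℂ) r := by linear_combination h0
    have : s ^ 2 = s := by
      have := congrArg (‖·‖) h1
      simpa [norm_pow, Complex.norm_conj] using this
    have : s = 1 := by nlinarith
    exact habs this
  have key : (starRingEnd ℂ) r * ((s : ℂ) ^ 2 + t) = r ^ 2 * (1 + t) := by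
    have := (div_eq_iff hden).mp h
    ring_nf
    ring_nf at this
    linear_combination this
  -- take absolute values
  have habs2 : s * (s ^ 2 + t) = s ^ 2 * (1 + t) := by
    have := congrArg (‖·‖) key
    rw [norm_mul, norm_mul] at this
    have e1 : ‖(s : ℂ) ^ 2 + (t : ℂ)‖ = s ^ 2 + t := by
      rw [show ((s : ℂ) ^ 2 + (t : ℂ)) = (((s ^ 2 + t : ℝ)) : ℂ) by push_cast; ring,
        Complex.norm_real, Real.norm_eq_abs]
      exact abs_of_pos (by positivity)
    have e2 : ‖1 + (t : ℂ)‖ = 1 + t := by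
      rw [show (1 + (t : ℂ)) = (((1 + t : ℝ)) : ℂ) by push_cast; ring,
        Complex.norm_real, Real.norm_eq_abs]
      exact abs_of_pos (by positivity)
    simpa [Complex.norm_conj, norm_pow, e1, e2, ← hs] using this
  have hts : t = s := by
    have hfac : (s - 1) * (s - t) = 0 := by nlinarith
    rcases mul_eq_zero.mp hfac with h1 | h2
    · exact absurd (by linarith : s = 1) habs
    · linarith
  refine ⟨?_, hts.symm ▸ rfl⟩
  -- now conj r * s = r ^ 2
  have hcs : (starRingEnd ℂ) r * (s : ℂ) = r ^ 2 := by
    have h1t : (1 : ℂ) + (t : ℂ) ≠ 0 := by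
      intro h0
      have : (1 + t : ℝ) = 0 :=
        Complex.ofReal_eq_zero.mp (by push_cast; linear_combination h0)
      linarith
    subst hts
    have h2 : (1 + (s:ℂ)) * ((starRingEnd ℂ) r * (s : ℂ)) = (1 + (s:ℂ)) * r ^ 2 := by
      linear_combination key
    exact mul_left_cancel₀ h1t h2
  have hcube : r ^ 3 = (s : ℂ) ^ 3 := by
    have h2 : (starRingEnd ℂ) r * r = ((s ^ 2 : ℝ) : ℂ) := by
      rw [mul_comm, Complex.mul_conj]
      norm_cast
      exact (Complex.sq_norm r).symm
    push_cast at h2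
    linear_combination (s : ℂ) * h2 - r * hcs
  -- cube roots of unity
  have hω : (r / s) ^ 3 = 1 := by
    have hsne : (s : ℂ) ≠ 0 := by exact_mod_cast hs0.ne'
    field_simp
    exact hcube
  have hprim : IsPrimitiveRoot (Complex.exp (2 * Real.pi * Complex.I / 3)) 3 := by
    simpa using Complex.isPrimitiveRoot_exp 3 (by norm_num)
  obtain ⟨m, hm3, hme⟩ := hprim.eq_pow_of_pow_eq_one hω
  refine ⟨m, hm3, ?_⟩
  have hsne : (s : ℂ) ≠ 0 := by exact_mod_cast hs0.ne'
  rw [hme]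
  field_simp
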